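/- Let q > 1 be a real number. For any bipartite quantum state ρ (a positive semidefinite matrix with trace 1) on a finite-dimensional bipartite Hilbert space ℂ^{d₁} ⊗ ℂ^{d₂} (i.e., a positive semidefinite matrix indexed by (Fin d₁ × Fin d₂) with trace 1), the inequality 1 + Tr[ρ^q] ≥ Tr[(Tr₁ρ)^q] + Tr[(Tr₂ρ)^q] holds. -/

import Mathlib

open Matrix ComplexOrder

/-- `Tr[A^q]` for a Hermitian matrix `A`, where `A^q` is the matrix power obtained by raising
each eigenvalue of `A` to the (real) power `q`; defined as `0` if `A` is not Hermitian. -/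
noncomputable def traceRpow {d : Type*} [Fintype d] [DecidableEq d]
    (q : ℝ) (A : Matrix d d ℂ) : ℝ :=
  if hA : A.IsHermitian then ∑ i, hA.eigenvalues i ^ q else 0

/-- The partial trace over the first tensor factor: `(Tr₁ρ)(j,j') = ∑ i, ρ((i,j),(i,j'))`. -/
noncomputable def ptrace1 {d₁ d₂ : ℕ}
    (ρ : Matrix (Fin d₁ × Fin d₂) (Fin d₁ × Fin d₂) ℂ) : Matrix (Fin d₂) (Fin d₂) ℂ :=
  Matrix.of fun j j' => ∑ i, ρ (i, j) (i, j')

/-- The partial trace over the second tensor factor: `(Tr₂ρ)(i,i') = ∑ j, ρ((i,j),(i',j))`. -/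
noncomputable def ptrace2 {d₁ d₂ : ℕ}
    (ρ : Matrix (Fin d₁ × Fin d₂) (Fin d₁ × Fin d₂) ℂ) : Matrix (Fin d₁) (Fin d₁) ℂ :=
  Matrix.of fun i i' => ∑ j, ρ (i, j) (i', j)

open Kronecker
/-- Classical Tsallis subadditivity for `q > 1`. -/
lemma tsallis_classical {ι κ : Type*} [Fintype ι] [Fintype κ] (q : ℝ) (hq : 1 < q)
    (m : ι → κ → ℝ) (hm : ∀ i j, 0 ≤ m i j) (hsum : ∑ i, ∑ j, m i j = 1) :
    (∑ i, (∑ j, m i j) ^ q) + (∑ j, (∑ i, m i j) ^ q) ≤ 1 + ∑ i, ∑ j, (m i j) ^ q := by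
  have hq0 : (0:ℝ) < q := by linarith
  have hq1 : (0:ℝ) ≤ q - 1 := by linarith
  set b : κ → ℝ := fun j => ∑ i, m i j with hb
  have hb0 : ∀ j, 0 ≤ b j := fun j => Finset.sum_nonneg fun i _ => hm i j
  have hbsum : ∑ j, b j = 1 := by rw [← hsum]; exact Finset.sum_comm
  have hmb : ∀ i j, m i j ≤ b j := fun i j =>
    Finset.single_le_sum (fun i _ => hm i j) (Finset.mem_univ i)
  have hb1 : ∀ j, b j ≤ 1 := by
    intro j
    rw [← hbsum]
    exact Finset.single_le_sum (fun j _ => hb0 j) (Finset.mem_univ j)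
  set t : κ → ℝ := fun j => ∑ i, (m i j) ^ q with ht
  have ht0 : ∀ j, 0 ≤ t j := fun j =>
    Finset.sum_nonneg fun i _ => Real.rpow_nonneg (hm i j) q
  -- `t j ≤ b j ^ q`
  have htb : ∀ j, t j ≤ b j ^ q := by
    intro j
    have h1 : ∀ i, (m i j) ^ q ≤ m i j * b j ^ (q - 1) := by
      intro i
      have : (m i j) ^ q = m i j * (m i j) ^ (q - 1) := by
        rw [← Real.rpow_one_add' (hm i j) (by linarith)]
        ring_nf
      rw [this]
      exact mul_le_mul_of_nonneg_left
        (Real.rpow_le_rpow (hm i j) (hmb i j) hq1) (hm i j)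
    calc t j ≤ ∑ i, m i j * b j ^ (q - 1) := Finset.sum_le_sum fun i _ => h1 i
      _ = b j * b j ^ (q-1) := by rw [← Finset.sum_mul]
      _ = b j ^ q := by
          rw [← Real.rpow_one_add' (hb0 j) (by linarith)]; ring_nf
  -- Jensen per `i`
  have hJ : ∀ i, (∑ j, m i j) ^ q ≤ ∑ j, b j ^ (1 - q) * (m i j) ^ q := by
    intro i
    classical
    set c : κ → ℝ := fun j => if b j = 0 then 0 else m i j / b j with hc
    have hc0 : ∀ j, 0 ≤ c j := by
      intro j
      by_cases h : b j = 0 <;> simp [hc, h, div_nonneg (hm i j) (hb0 j)]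
    have hmc : ∀ j, m i j = b j * c j := by
      intro j
      by_cases h : b j = 0
      · have : m i j = 0 := le_antisymm (h ▸ hmb i j) (hm i j)
        simp [hc, h, this]
      · simp only [hc, h, if_false]
        field_simp
    have key := Real.rpow_arith_mean_le_arith_mean_rpow Finset.univ b c
      (fun j _ => hb0 j) hbsum (fun j _ => hc0 j) hq.le
    have heq : ∀ j, b j * c j ^ q = b j ^ (1 - q) * (m i j) ^ q := by
      intro j
      by_cases h : b j = 0
      · have hm0 : m i j = 0 := le_antisymm (h ▸ hmb i j) (hm i j)
        simp [hc, h, hm0, Real.zero_rpow (ne_of_gt hq0),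
          Real.zero_rpow (show (1:ℝ) - q ≠ 0 by linarith)]
      · have hbpos : 0 < b j := lt_of_le_of_ne (hb0 j) (Ne.symm h)
        rw [hc]
        simp only [h, if_false]
        rw [Real.div_rpow (hm i j) (hb0 j), Real.rpow_sub hbpos, Real.rpow_one]
        field_simp
      
    calc (∑ j, m i j) ^ q = (∑ j, b j * c j) ^ q := by
          congr 1; exact Finset.sum_congr rfl fun j _ => hmc j
      _ ≤ ∑ j, b j * c j ^ q := key
      _ = ∑ j, b j ^ (1 - q) * (m i j) ^ q := Finset.sum_congr rfl fun j _ => heq j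
  -- per-j final inequality
  have hfin : ∀ j, b j ^ (1 - q) * t j + b j ^ q ≤ b j + t j := by
    intro j
    by_cases h : b j = 0
    · have ht0' : t j = 0 := by
        rw [ht]
        refine Finset.sum_eq_zero fun i _ => ?_
        have : m i j = 0 := le_antisymm (h ▸ hmb i j) (hm i j)
        simp [this, Real.zero_rpow (ne_of_gt hq0)]
      simp [h, ht0', Real.zero_rpow (ne_of_gt hq0)]
    · have hbpos : 0 < b j := lt_of_le_of_ne (hb0 j) (Ne.symm h)
      have h1 : (1:ℝ) ≤ b j ^ (1 - q) := by
        have := Real.rpow_le_rpow_of_exponent_ge hbpos (hb1 j) (show 1 - q ≤ 0 by linarith)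
        rwa [Real.rpow_zero] at this
      have h2 : (b j ^ (1 - q) - 1) * t j ≤ (b j ^ (1 - q) - 1) * b j ^ q :=
        mul_le_mul_of_nonneg_left (htb j) (by linarith)
      have h3 : b j ^ (1 - q) * b j ^ q = b j := by
        rw [← Real.rpow_add hbpos]; norm_num
      nlinarith [ht0 j]
  -- combine
  have step1 : ∑ i, (∑ j, m i j) ^ q ≤ ∑ j, b j ^ (1 - q) * t j := by
    calc ∑ i, (∑ j, m i j) ^ q ≤ ∑ i, ∑ j, b j ^ (1 - q) * (m i j) ^ q :=
          Finset.sum_le_sum fun i _ => hJ i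
      _ = ∑ j, ∑ i, b j ^ (1 - q) * (m i j) ^ q := Finset.sum_comm
      _ = ∑ j, b j ^ (1 - q) * t j := by
          refine Finset.sum_congr rfl fun j _ => ?_
          rw [ht, Finset.mul_sum]
  have step2 : ∑ i, ∑ j, (m i j) ^ q = ∑ j, t j := Finset.sum_comm
  calc (∑ i, (∑ j, m i j) ^ q) + (∑ j, (∑ i, m i j) ^ q)
      ≤ (∑ j, b j ^ (1 - q) * t j) + ∑ j, b j ^ q := by
        exact add_le_add step1 le_rfl
    _ = ∑ j, (b j ^ (1 - q) * t j + b j ^ q) := by rw [← Finset.sum_add_distrib]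
    _ ≤ ∑ j, (b j + t j) := Finset.sum_le_sum fun j _ => hfin j
    _ = 1 + ∑ i, ∑ j, (m i j) ^ q := by
        rw [Finset.sum_add_distrib, hbsum, step2]

/-- Jensen-type inequality: diagonal of conjugated nonneg diagonal matrix. -/
lemma jensen_unitary {n : Type*} [Fintype n] [DecidableEq n] (q : ℝ) (hq : 1 ≤ q)
    (Z : Matrix n n ℂ) (hZ1 : Zᴴ * Z = 1) (hZ2 : Z * Zᴴ = 1)
    (r : n → ℝ) (hr : ∀ k, 0 ≤ r k) :
    ∑ c, (∑ k, r k * Complex.normSq (Z k c)) ^ q ≤ ∑ k, (r k) ^ q := by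
  have hcol : ∀ c, ∑ k, Complex.normSq (Z k c) = 1 := by
    intro c
    have := congrArg (fun M : Matrix n n ℂ => M c c) hZ1
    simp only [Matrix.mul_apply, Matrix.one_apply_eq, Matrix.conjTranspose_apply] at this
    have : (↑(∑ k, Complex.normSq (Z k c)) : ℂ) = 1 := by
      rw [Complex.ofReal_sum]
      rw [← this]
      exact Finset.sum_congr rfl fun k _ => by
        rw [Complex.normSq_eq_conj_mul_self]; rfl
    exact_mod_cast this
  have hrow : ∀ k, ∑ c, Complex.normSq (Z k c) = 1 := by
    intro k
    have := congrArg (fun M : Matrix n n ℂ => M k k) hZ2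
    simp only [Matrix.mul_apply, Matrix.one_apply_eq, Matrix.conjTranspose_apply] at this
    have : (↑(∑ c, Complex.normSq (Z k c)) : ℂ) = 1 := by
      rw [Complex.ofReal_sum]
      rw [← this]
      exact Finset.sum_congr rfl fun c _ => by
        rw [Complex.normSq_eq_conj_mul_self]
        change _ = Z k c * (starRingEnd ℂ) (Z k c); ring
    exact_mod_cast this
  have key : ∀ c, (∑ k, r k * Complex.normSq (Z k c)) ^ q
      ≤ ∑ k, Complex.normSq (Z k c) * (r k) ^ q := by
    intro c
    have := Real.rpow_arith_mean_le_arith_mean_rpow Finset.univ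
      (fun k => Complex.normSq (Z k c)) r
      (fun k _ => Complex.normSq_nonneg _) (hcol c) (fun k _ => hr k) hq
    convert this using 2
    · exact Finset.sum_congr rfl fun k _ => mul_comm _ _
  calc ∑ c, (∑ k, r k * Complex.normSq (Z k c)) ^ q
      ≤ ∑ c, ∑ k, Complex.normSq (Z k c) * (r k) ^ q :=
        Finset.sum_le_sum fun c _ => key c
    _ = ∑ k, ∑ c, Complex.normSq (Z k c) * (r k) ^ q := Finset.sum_comm
    _ = ∑ k, (r k) ^ q := by
        refine Finset.sum_congr rfl fun k _ => ?_
        rw [← Finset.sum_mul, hrow k, one_mul]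

lemma ptrace2_conj {d₁ d₂ : ℕ} (ρ : Matrix (Fin d₁ × Fin d₂) (Fin d₁ × Fin d₂) ℂ)
    (X : Matrix (Fin d₁) (Fin d₁) ℂ) (Y : Matrix (Fin d₂) (Fin d₂) ℂ) (hY : Y * Yᴴ = 1) :
    ptrace2 ((X ⊗ₖ Y)ᴴ * ρ * (X ⊗ₖ Y)) = Xᴴ * ptrace2 ρ * X := by
  have hYj : ∀ (l l' : Fin d₂), (∑ j, star (Y l j) * Y l' j)
      = (1 : Matrix (Fin d₂) (Fin d₂) ℂ) l' l := by
    intro l l'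
    rw [← hY, Matrix.mul_apply]
    exact Finset.sum_congr rfl fun j _ => by
      rw [Matrix.conjTranspose_apply]; ring
  ext i i'
  simp only [ptrace2, of_apply, Matrix.mul_apply, Matrix.conjTranspose_apply,
    Matrix.kroneckerMap_apply, Fintype.sum_prod_type, Finset.sum_mul, Finset.mul_sum]
  rw [Finset.sum_comm]
  refine Finset.sum_congr rfl fun k' _ => ?_
  rw [Finset.sum_comm]
  -- goal: ∑ l', ∑ j, ∑ k, ∑ l, ... = ∑ k, ∑ l, ...
  have hterm : ∀ (l' : Fin d₂), ∑ j, ∑ k, ∑ l,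
      star (X k i * Y l j) * ρ (k, l) (k', l') * (X k' i' * Y l' j)
      = ∑ k, ∑ l, (star (X k i) * ρ (k, l) (k', l') * X k' i')
          * (1 : Matrix (Fin d₂) (Fin d₂) ℂ) l' l := by
    intro l'
    rw [Finset.sum_comm]
    refine Finset.sum_congr rfl fun k _ => ?_
    rw [Finset.sum_comm]
    refine Finset.sum_congr rfl fun l _ => ?_
    rw [← hYj l l', Finset.mul_sum]
    refine Finset.sum_congr rfl fun j _ => ?_
    simp only [star_mul']
    ring
  calc ∑ l', ∑ j, ∑ k, ∑ l,
        star (X k i * Y l j) * ρ (k, l) (k', l') * (X k' i' * Y l' j)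
      = ∑ l', ∑ k, ∑ l, (star (X k i) * ρ (k, l) (k', l') * X k' i')
          * (1 : Matrix (Fin d₂) (Fin d₂) ℂ) l' l :=
        Finset.sum_congr rfl fun l' _ => hterm l'
    _ = ∑ k, ∑ l, ∑ l', (star (X k i) * ρ (k, l) (k', l') * X k' i')
          * (1 : Matrix (Fin d₂) (Fin d₂) ℂ) l' l := by
        rw [Finset.sum_comm]
        exact Finset.sum_congr rfl fun k _ => Finset.sum_comm
    _ = ∑ k, ∑ l, star (X k i) * ρ (k, l) (k', l) * X k' i' := by
        refine Finset.sum_congr rfl fun k _ => Finset.sum_congr rfl fun l _ => ?_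
        simp [Matrix.one_apply]

lemma ptrace1_conj {d₁ d₂ : ℕ} (ρ : Matrix (Fin d₁ × Fin d₂) (Fin d₁ × Fin d₂) ℂ)
    (X : Matrix (Fin d₁) (Fin d₁) ℂ) (Y : Matrix (Fin d₂) (Fin d₂) ℂ) (hX : X * Xᴴ = 1) :
    ptrace1 ((X ⊗ₖ Y)ᴴ * ρ * (X ⊗ₖ Y)) = Yᴴ * ptrace1 ρ * Y := by
  have hXi : ∀ (k k' : Fin d₁), (∑ i, star (X k i) * X k' i)
      = (1 : Matrix (Fin d₁) (Fin d₁) ℂ) k' k := by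
    intro k k'
    rw [← hX, Matrix.mul_apply]
    exact Finset.sum_congr rfl fun i _ => by
      rw [Matrix.conjTranspose_apply]; ring
  ext j j'
  simp only [ptrace1, of_apply, Matrix.mul_apply, Matrix.conjTranspose_apply,
    Matrix.kroneckerMap_apply, Fintype.sum_prod_type, Finset.sum_mul, Finset.mul_sum]
  rw [Finset.sum_comm]
  calc ∑ k', ∑ i, ∑ l', ∑ k, ∑ l,
        star (X k i * Y l j) * ρ (k, l) (k', l') * (X k' i * Y l' j')
      = ∑ k', ∑ l', ∑ k, ∑ l, (star (Y l j) * ρ (k, l) (k', l') * Y l' j')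
            * (1 : Matrix (Fin d₁) (Fin d₁) ℂ) k' k := by
        refine Finset.sum_congr rfl fun k' _ => ?_
        rw [Finset.sum_comm]
        refine Finset.sum_congr rfl fun l' _ => ?_
        rw [Finset.sum_comm]
        refine Finset.sum_congr rfl fun k _ => ?_
        rw [Finset.sum_comm]
        refine Finset.sum_congr rfl fun l _ => ?_
        rw [← hXi k k', Finset.mul_sum]
        refine Finset.sum_congr rfl fun i _ => ?_
        simp only [star_mul']
        ring
    _ = ∑ l', ∑ l, ∑ k, ∑ k', (star (Y l j) * ρ (k, l) (k', l') * Y l' j')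
            * (1 : Matrix (Fin d₁) (Fin d₁) ℂ) k' k := by
        rw [Finset.sum_comm]
        refine Finset.sum_congr rfl fun l' _ => ?_
        rw [Finset.sum_comm]
        exact (Finset.sum_congr rfl fun k _ => Finset.sum_comm).trans Finset.sum_comm
    _ = ∑ l', ∑ l, ∑ k, star (Y l j) * ρ (k, l) (k, l') * Y l' j' := by
        refine Finset.sum_congr rfl fun l' _ => Finset.sum_congr rfl fun l _ =>
          Finset.sum_congr rfl fun k _ => ?_
        simp [Matrix.one_apply]

lemma kron_conjTranspose {d₁ d₂ : ℕ} (X : Matrix (Fin d₁) (Fin d₁) ℂ)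
    (Y : Matrix (Fin d₂) (Fin d₂) ℂ) : (X ⊗ₖ Y)ᴴ = Xᴴ ⊗ₖ Yᴴ := by
  ext ⟨i, j⟩ ⟨k, l⟩
  simp [Matrix.conjTranspose_apply, Matrix.kroneckerMap_apply, star_mul']

lemma ptrace2_isHermitian {d₁ d₂ : ℕ} {ρ : Matrix (Fin d₁ × Fin d₂) (Fin d₁ × Fin d₂) ℂ}
    (hρ : ρ.IsHermitian) : (ptrace2 ρ).IsHermitian := by
  ext i i'
  simp only [Matrix.conjTranspose_apply, ptrace2, of_apply, star_sum]
  exact Finset.sum_congr rfl fun j _ => hρ.apply _ _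

lemma ptrace1_isHermitian {d₁ d₂ : ℕ} {ρ : Matrix (Fin d₁ × Fin d₂) (Fin d₁ × Fin d₂) ℂ}
    (hρ : ρ.IsHermitian) : (ptrace1 ρ).IsHermitian := by
  ext j j'
  simp only [Matrix.conjTranspose_apply, ptrace1, of_apply, star_sum]
  exact Finset.sum_congr rfl fun i _ => hρ.apply _ _


/-- For `q > 1` and any bipartite state `ρ` on `ℂ^{d₁} ⊗ ℂ^{d₂}`,
`1 + Tr[ρ^q] ≥ Tr[(Tr₁ρ)^q] + Tr[(Tr₂ρ)^q]`. -/
theorem traceRpow_partial_traces_le {d₁ d₂ : ℕ} (q : ℝ) (hq : 1 < q)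
    (ρ : Matrix (Fin d₁ × Fin d₂) (Fin d₁ × Fin d₂) ℂ)
    (hρ : ρ.PosSemidef) (htr : ρ.trace = 1) :
    traceRpow q (ptrace1 ρ) + traceRpow q (ptrace2 ρ) ≤ 1 + traceRpow q ρ := by

  classical
  have hH : ρ.IsHermitian := hρ.1
  have hA : (ptrace2 ρ).IsHermitian := ptrace2_isHermitian hH
  have hB : (ptrace1 ρ).IsHermitian := ptrace1_isHermitian hH
  set U₁ : Matrix (Fin d₁) (Fin d₁) ℂ := (hA.eigenvectorUnitary : Matrix (Fin d₁) (Fin d₁) ℂ) with hU₁def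
  set U₂ : Matrix (Fin d₂) (Fin d₂) ℂ := (hB.eigenvectorUnitary : Matrix (Fin d₂) (Fin d₂) ℂ) with hU₂def
  set W : Matrix (Fin d₁ × Fin d₂) (Fin d₁ × Fin d₂) ℂ :=
    (hH.eigenvectorUnitary : Matrix (Fin d₁ × Fin d₂) (Fin d₁ × Fin d₂) ℂ) with hWdef
  have hU₁ : U₁ * U₁ᴴ = 1 := by
    rw [← Matrix.star_eq_conjTranspose]
    exact Matrix.mem_unitaryGroup_iff.mp hA.eigenvectorUnitary.2
  have hU₁' : U₁ᴴ * U₁ = 1 := by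
    rw [← Matrix.star_eq_conjTranspose]
    exact Matrix.mem_unitaryGroup_iff'.mp hA.eigenvectorUnitary.2
  have hU₂ : U₂ * U₂ᴴ = 1 := by
    rw [← Matrix.star_eq_conjTranspose]
    exact Matrix.mem_unitaryGroup_iff.mp hB.eigenvectorUnitary.2
  have hU₂' : U₂ᴴ * U₂ = 1 := by
    rw [← Matrix.star_eq_conjTranspose]
    exact Matrix.mem_unitaryGroup_iff'.mp hB.eigenvectorUnitary.2
  have hW : W * Wᴴ = 1 := by
    rw [← Matrix.star_eq_conjTranspose]
    exact Matrix.mem_unitaryGroup_iff.mp hH.eigenvectorUnitary.2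
  have hW' : Wᴴ * W = 1 := by
    rw [← Matrix.star_eq_conjTranspose]
    exact Matrix.mem_unitaryGroup_iff'.mp hH.eigenvectorUnitary.2
  set V : Matrix (Fin d₁ × Fin d₂) (Fin d₁ × Fin d₂) ℂ := U₁ ⊗ₖ U₂ with hVdef
  have hV : V * Vᴴ = 1 := by
    rw [hVdef, kron_conjTranspose, ← Matrix.mul_kronecker_mul, hU₁, hU₂,
      Matrix.one_kronecker_one]
  have hV' : Vᴴ * V = 1 := by
    rw [hVdef, kron_conjTranspose, ← Matrix.mul_kronecker_mul, hU₁', hU₂',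
      Matrix.one_kronecker_one]
  set Z : Matrix (Fin d₁ × Fin d₂) (Fin d₁ × Fin d₂) ℂ := Wᴴ * V with hZdef
  have hZ' : Zᴴ * Z = 1 := by
    rw [hZdef, Matrix.conjTranspose_mul, Matrix.conjTranspose_conjTranspose, Matrix.mul_assoc,
      ← Matrix.mul_assoc W, hW, Matrix.one_mul, hV']
  have hZ : Z * Zᴴ = 1 := by
    rw [hZdef, Matrix.conjTranspose_mul, Matrix.conjTranspose_conjTranspose, Matrix.mul_assoc,
      ← Matrix.mul_assoc V, hV, Matrix.one_mul, hW']
  set r : Fin d₁ × Fin d₂ → ℝ := hH.eigenvalues with hrdef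
  have hr : ∀ k, 0 ≤ r k := fun k => hρ.eigenvalues_nonneg k
  set m : Fin d₁ → Fin d₂ → ℝ := fun i j => ∑ k, r k * Complex.normSq (Z k (i, j)) with hmdef
  -- diagonal entries of the conjugated matrix
  have hMc : ∀ c : Fin d₁ × Fin d₂, (Vᴴ * ρ * V) c c = ((m c.1 c.2 : ℝ) : ℂ) := by
    intro c
    have hconj : Vᴴ * ρ * V = Zᴴ * diagonal (RCLike.ofReal ∘ r) * Z := by
      conv_lhs => rw [hH.spectral_theorem, Unitary.conjStarAlgAut_apply]
      rw [hZdef, Matrix.conjTranspose_mul, Matrix.conjTranspose_conjTranspose]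
      rw [← hWdef, ← hrdef]
      noncomm_ring
    rw [hconj]
    rw [Matrix.mul_apply]
    rw [hmdef]
    push_cast
    refine Finset.sum_congr rfl fun k _ => ?_
    rw [Matrix.mul_diagonal, Matrix.conjTranspose_apply]
    rw [show ((Complex.normSq (Z k c) : ℝ) : ℂ) = star (Z k c) * Z k c from
      Complex.normSq_eq_conj_mul_self]
    have : (RCLike.ofReal ∘ r) k = ((r k : ℝ) : ℂ) := rfl
    rw [this]
    ring
  -- marginal identities
  have hptr2 : ptrace2 (Vᴴ * ρ * V) = U₁ᴴ * ptrace2 ρ * U₁ := ptrace2_conj ρ U₁ U₂ hU₂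
  have hptr1 : ptrace1 (Vᴴ * ρ * V) = U₂ᴴ * ptrace1 ρ * U₂ := ptrace1_conj ρ U₁ U₂ hU₁
  have hdiag2 : U₁ᴴ * ptrace2 ρ * U₁ = diagonal (RCLike.ofReal ∘ hA.eigenvalues) := by
    have := hA.conjStarAlgAut_star_eigenvectorUnitary
    rwa [Unitary.conjStarAlgAut_star_apply, Matrix.star_eq_conjTranspose] at this
  have hdiag1 : U₂ᴴ * ptrace1 ρ * U₂ = diagonal (RCLike.ofReal ∘ hB.eigenvalues) := by
    have := hB.conjStarAlgAut_star_eigenvectorUnitary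
    rwa [Unitary.conjStarAlgAut_star_apply, Matrix.star_eq_conjTranspose] at this
  have hma : ∀ i, ∑ j, m i j = hA.eigenvalues i := by
    intro i
    have h1 : ((∑ j, m i j : ℝ) : ℂ) = ((hA.eigenvalues i : ℝ) : ℂ) := by
      calc ((∑ j, m i j : ℝ) : ℂ) = ∑ j, ((m i j : ℝ) : ℂ) := by push_cast; rfl
        _ = ∑ j, (Vᴴ * ρ * V) (i, j) (i, j) :=
            Finset.sum_congr rfl fun j _ => (hMc (i, j)).symm
        _ = ptrace2 (Vᴴ * ρ * V) i i := rfl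
        _ = diagonal (RCLike.ofReal ∘ hA.eigenvalues) i i := by rw [hptr2, hdiag2]
        _ = ((hA.eigenvalues i : ℝ) : ℂ) := by
            simp [Matrix.diagonal_apply_eq, Function.comp]
    exact_mod_cast h1
  have hmb : ∀ j, ∑ i, m i j = hB.eigenvalues j := by
    intro j
    have h1 : ((∑ i, m i j : ℝ) : ℂ) = ((hB.eigenvalues j : ℝ) : ℂ) := by
      calc ((∑ i, m i j : ℝ) : ℂ) = ∑ i, ((m i j : ℝ) : ℂ) := by push_cast; rfl
        _ = ∑ i, (Vᴴ * ρ * V) (i, j) (i, j) :=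
            Finset.sum_congr rfl fun i _ => (hMc (i, j)).symm
        _ = ptrace1 (Vᴴ * ρ * V) j j := rfl
        _ = diagonal (RCLike.ofReal ∘ hB.eigenvalues) j j := by rw [hptr1, hdiag1]
        _ = ((hB.eigenvalues j : ℝ) : ℂ) := by
            simp [Matrix.diagonal_apply_eq, Function.comp]
    exact_mod_cast h1
  -- total sum is 1
  have htrA : (ptrace2 ρ).trace = 1 := by
    rw [← htr]
    rw [Matrix.trace, Matrix.trace]
    rw [Fintype.sum_prod_type]
    rfl
  have hasum : ∑ i, hA.eigenvalues i = 1 := by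
    have h1 : ((∑ i, hA.eigenvalues i : ℝ) : ℂ) = 1 := by
      calc ((∑ i, hA.eigenvalues i : ℝ) : ℂ)
          = (diagonal (RCLike.ofReal ∘ hA.eigenvalues)).trace := by
            rw [Matrix.trace_diagonal]
            push_cast
            rfl
        _ = (U₁ᴴ * ptrace2 ρ * U₁).trace := by rw [hdiag2]
        _ = (ptrace2 ρ).trace := by
            rw [Matrix.trace_mul_cycle, hU₁, Matrix.one_mul]
        _ = 1 := htrA
    exact_mod_cast h1
  have hmsum : ∑ i, ∑ j, m i j = 1 := by
    rw [← hasum]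
    exact Finset.sum_congr rfl fun i _ => hma i
  have hm0 : ∀ i j, 0 ≤ m i j := fun i j =>
    Finset.sum_nonneg fun k _ => mul_nonneg (hr k) (Complex.normSq_nonneg _)
  -- the two scalar inequalities
  have hclass := tsallis_classical q hq m hm0 hmsum
  have hjensen : ∑ i, ∑ j, (m i j) ^ q ≤ ∑ k, r k ^ q := by
    have h := jensen_unitary q hq.le Z hZ' hZ r hr
    calc ∑ i, ∑ j, (m i j) ^ q
        = ∑ c : Fin d₁ × Fin d₂, (∑ k, r k * Complex.normSq (Z k c)) ^ q := by
          rw [Fintype.sum_prod_type]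
      _ ≤ _ := h
  simp only [traceRpow]
  rw [dif_pos hB, dif_pos hA, dif_pos hH]
  have e1 : ∑ j, hB.eigenvalues j ^ q = ∑ j, (∑ i, m i j) ^ q :=
    Finset.sum_congr rfl fun j _ => by rw [hmb j]
  have e2 : ∑ i, hA.eigenvalues i ^ q = ∑ i, (∑ j, m i j) ^ q :=
    Finset.sum_congr rfl fun i _ => by rw [hma i]
  rw [e1, e2]
  linarith [hclass, hjensen]
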